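/- Let S(X) = Σ_{m=0}^{d} c_m·X^m be an arbitrary polynomial with complex coefficients (the paper states the result for any function analytic at 0) and set S(Â) = Σ_{m=0}^{d} c_m·Â^m. Then for all indices j,k,l ∈ Fin n: i·Σ_i Â^j_i · ∂^i_A([S(Â)]^k_l) = Σ_i [S(Â)]^k_i · f^{ij}_l + Σ_i [S(Â)]^i_l · f^{jk}_i. -/

import Mathlib

open MvPolynomial

/-- For an arbitrary polynomial `S(X) = Σ_{m=0}^d c_m X^m` with complex
coefficients and `S(Â) = Σ_{m=0}^d c_m Â^m`, the identity
`i Σ_i Â^j_i ∂^i_A([S(Â)]^k_l) = Σ_i [S(Â)]^k_i f^{ij}_l + Σ_i [S(Â)]^i_l f^{jk}_i` holds. -/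
theorem deriv_identity_polynomial (n : ℕ) (f : Fin n → Fin n → Fin n → ℂ)
    (hanti : ∀ a b c, f a b c = - f b a c)
    (hjac : ∀ i j k a, ∑ l, (f k l i * f j a l + f j l i * f a k l + f a l i * f k j l) = 0)
    (Ahat : Matrix (Fin n) (Fin n) (MvPolynomial (Fin n) ℂ))
    (hA : ∀ b c, Ahat b c = ∑ a, MvPolynomial.C (-Complex.I * f a b c) * MvPolynomial.X a)
    (d : ℕ) (c : ℕ → ℂ)
    (SA : Matrix (Fin n) (Fin n) (MvPolynomial (Fin n) ℂ))
    (hS : SA = ∑ m ∈ Finset.range (d + 1), (MvPolynomial.C (c m) : MvPolynomial (Fin n) ℂ) • Ahat ^ m)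
    (j k l : Fin n) :
    MvPolynomial.C Complex.I * ∑ i, Ahat j i * MvPolynomial.pderiv i (SA k l) =
      ∑ i, SA k i * MvPolynomial.C (f i j l) +
      ∑ i, SA i l * MvPolynomial.C (f j k i) := by
  -- derivative of the entries of Ahat
  have hpd : ∀ (s b c' : Fin n), pderiv s (Ahat b c') = C (-Complex.I * f s b c') := by
    intro s b c'
    rw [hA, map_sum]
    simp [pderiv_X, Pi.single_apply, mul_ite, Finset.sum_ite_eq]
  have hIC : ∀ x : ℂ, (C Complex.I : MvPolynomial (Fin n) ℂ) * C (-Complex.I * x) = C x := by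
    intro x
    rw [← C_mul]
    congr 1
    rw [neg_mul, mul_neg, ← mul_assoc, Complex.I_mul_I]
    ring
  -- scalar consequence of the Jacobi identity
  have scalar : ∀ (a p l' : Fin n),
      (∑ s, f p j s * (-Complex.I * f a s l')) + ∑ s, (-Complex.I * f a j s) * f s p l'
        = ∑ s, (-Complex.I * f a p s) * f s j l' := by
    intro a p l'
    have h := hjac l' a p j
    rw [← sub_eq_zero, ← Finset.sum_add_distrib, ← Finset.sum_sub_distrib]
    have e : ∀ s : Fin n,
        f p j s * (-Complex.I * f a s l') + (-Complex.I * f a j s) * f s p l'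
          - (-Complex.I * f a p s) * f s j l'
        = Complex.I * (f p s l' * f a j s + f a s l' * f j p s + f j s l' * f p a s) := by
      intro s
      rw [hanti s p l', hanti s j l', hanti p j s, hanti p a s]
      ring
    rw [Finset.sum_congr rfl fun s _ => e s, ← Finset.mul_sum, h, mul_zero]
  -- expansion helpers
  have e1 : ∀ (g : Fin n → ℂ) (q : Fin n),
      ∑ s, C (g s) * Ahat s q = ∑ a, C (∑ s, g s * (-Complex.I * f a s q)) * X a := by
    intro g q
    simp only [hA, Finset.mul_sum]
    rw [Finset.sum_comm]
    refine Finset.sum_congr rfl fun a _ => ?_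
    rw [map_sum, Finset.sum_mul]
    refine Finset.sum_congr rfl fun s _ => ?_
    simp only [map_mul, map_neg]
    ring
  have e2 : ∀ (g : Fin n → ℂ) (p : Fin n),
      ∑ s, Ahat p s * C (g s) = ∑ a, C (∑ s, (-Complex.I * f a p s) * g s) * X a := by
    intro g p
    simp only [hA, Finset.sum_mul]
    rw [Finset.sum_comm]
    refine Finset.sum_congr rfl fun a _ => ?_
    rw [map_sum, Finset.sum_mul]
    refine Finset.sum_congr rfl fun s _ => ?_
    simp only [map_mul, map_neg]
    ring
  -- key matrix identity
  have key : ∀ (p l' : Fin n),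
      (∑ s, C (f p j s) * Ahat s l') + ∑ s, Ahat j s * C (f s p l')
        = ∑ s, Ahat p s * C (f s j l') := by
    intro p l'
    rw [e1 (fun s => f p j s) l', e2 (fun s => f s p l') j, e2 (fun s => f s j l') p,
      ← Finset.sum_add_distrib]
    refine Finset.sum_congr rfl fun a _ => ?_
    rw [← add_mul, ← C_add, scalar a p l']
  -- identity for powers of Ahat
  have hpow : ∀ (m : ℕ) (k' l' : Fin n),
      C Complex.I * ∑ s, Ahat j s * pderiv s ((Ahat ^ m) k' l')
        = (∑ s, (Ahat ^ m) k' s * C (f s j l')) + ∑ s, (Ahat ^ m) s l' * C (f j k' s) := by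
    intro m
    induction m with
    | zero =>
      intro k' l'
      have hd : ∀ s : Fin n, pderiv s ((Ahat ^ 0) k' l') = 0 := by
        intro s
        rw [pow_zero, Matrix.one_apply]
        split_ifs <;> simp
      have h0 : (C Complex.I : MvPolynomial (Fin n) ℂ)
          * ∑ s, Ahat j s * pderiv s ((Ahat ^ 0) k' l') = 0 := by
        simp only [hd, mul_zero, Finset.sum_const_zero]
      rw [h0]
      simp only [pow_zero, Matrix.one_apply, ite_mul, one_mul, zero_mul]
      rw [Finset.sum_ite_eq, Finset.sum_ite_eq']
      simp only [Finset.mem_univ, if_true]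
      rw [← C_add, hanti k' j l']
      simp
    | succ m ih =>
      intro k' l'
      have hmul : ∀ s : Fin n, pderiv s ((Ahat ^ (m + 1)) k' l')
          = ∑ p, (pderiv s ((Ahat ^ m) k' p) * Ahat p l'
              + (Ahat ^ m) k' p * pderiv s (Ahat p l')) := by
        intro s
        rw [pow_succ, Matrix.mul_apply, map_sum]
        exact Finset.sum_congr rfl fun p _ => pderiv_mul
      calc C Complex.I * ∑ s, Ahat j s * pderiv s ((Ahat ^ (m + 1)) k' l')
          = (∑ s, ∑ p, C Complex.I * (Ahat j s * (pderiv s ((Ahat ^ m) k' p) * Ahat p l')))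
            + ∑ s, ∑ p, C Complex.I * (Ahat j s * ((Ahat ^ m) k' p * pderiv s (Ahat p l'))) := by
            simp only [hmul, Finset.mul_sum, mul_add, Finset.sum_add_distrib]
        _ = (∑ p, (C Complex.I * ∑ s, Ahat j s * pderiv s ((Ahat ^ m) k' p)) * Ahat p l')
            + ∑ p, (Ahat ^ m) k' p * (C Complex.I * ∑ s, Ahat j s * pderiv s (Ahat p l')) := by
            congr 1
            · rw [Finset.sum_comm]
              refine Finset.sum_congr rfl fun p _ => ?_
              rw [Finset.mul_sum, Finset.sum_mul]
              exact Finset.sum_congr rfl fun s _ => by ring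
            · rw [Finset.sum_comm]
              refine Finset.sum_congr rfl fun p _ => ?_
              rw [Finset.mul_sum, Finset.mul_sum]
              exact Finset.sum_congr rfl fun s _ => by ring
        _ = (∑ p, ((∑ s, (Ahat ^ m) k' s * C (f s j p)) + ∑ s, (Ahat ^ m) s p * C (f j k' s)) * Ahat p l')
            + ∑ p, (Ahat ^ m) k' p * ∑ s, Ahat j s * C (f s p l') := by
            congr 1
            · exact Finset.sum_congr rfl fun p _ => by rw [ih k' p]
            · refine Finset.sum_congr rfl fun p _ => ?_
              congr 1
              rw [Finset.mul_sum]
              refine Finset.sum_congr rfl fun s _ => ?_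
              rw [hpd s p l', mul_left_comm, hIC]
        _ = ((∑ p, (∑ s, (Ahat ^ m) k' s * C (f s j p)) * Ahat p l')
              + ∑ p, (Ahat ^ m) k' p * ∑ s, Ahat j s * C (f s p l'))
            + ∑ p, (∑ s, (Ahat ^ m) s p * C (f j k' s)) * Ahat p l' := by
            simp only [add_mul, Finset.sum_add_distrib]
            ring
        _ = (∑ p, (Ahat ^ m) k' p * ∑ s, Ahat p s * C (f s j l'))
            + ∑ p, (∑ s, (Ahat ^ m) s p * C (f j k' s)) * Ahat p l' := by
            congr 1
            have h1 : ∀ p : Fin n, (∑ s, (Ahat ^ m) k' s * C (f s j p)) * Ahat p l'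
                = ∑ s, (Ahat ^ m) k' s * (C (f s j p) * Ahat p l') := by
              intro p
              rw [Finset.sum_mul]
              exact Finset.sum_congr rfl fun s _ => by ring
            rw [Finset.sum_congr rfl fun p _ => h1 p, Finset.sum_comm, ← Finset.sum_add_distrib]
            refine Finset.sum_congr rfl fun p _ => ?_
            rw [← Finset.mul_sum, ← mul_add, key p l']
        _ = (∑ s, (Ahat ^ (m + 1)) k' s * C (f s j l'))
            + ∑ s, (Ahat ^ (m + 1)) s l' * C (f j k' s) := by
            simp only [pow_succ, Matrix.mul_apply]
            refine congrArg₂ (· + ·) ?_ ?_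
            · have h2 : ∀ p : Fin n, (Ahat ^ m) k' p * ∑ s, Ahat p s * C (f s j l')
                  = ∑ s, (Ahat ^ m) k' p * Ahat p s * C (f s j l') := by
                intro p
                rw [Finset.mul_sum]
                exact Finset.sum_congr rfl fun s _ => by ring
              rw [Finset.sum_congr rfl fun p _ => h2 p, Finset.sum_comm]
              exact Finset.sum_congr rfl fun s _ => by rw [Finset.sum_mul]
            · have h3 : ∀ p : Fin n, (∑ s, (Ahat ^ m) s p * C (f j k' s)) * Ahat p l'
                  = ∑ s, (Ahat ^ m) s p * Ahat p l' * C (f j k' s) := by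
                intro p
                rw [Finset.sum_mul]
                exact Finset.sum_congr rfl fun s _ => by ring
              rw [Finset.sum_congr rfl fun p _ => h3 p, Finset.sum_comm]
              exact Finset.sum_congr rfl fun s _ => by rw [Finset.sum_mul]
  -- conclude by linearity
  subst hS
  simp only [Matrix.sum_apply, Matrix.smul_apply]
  simp only [smul_eq_mul]
  simp only [map_sum, pderiv_C_mul]
  have h1 : ∀ s : Fin n, Ahat j s * ∑ m ∈ Finset.range (d + 1), C (c m) * pderiv s ((Ahat ^ m) k l)
      = ∑ m ∈ Finset.range (d + 1), C (c m) * (Ahat j s * pderiv s ((Ahat ^ m) k l)) := by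
    intro s
    rw [Finset.mul_sum]
    exact Finset.sum_congr rfl fun m _ => by ring
  rw [Finset.sum_congr rfl fun s _ => h1 s, Finset.sum_comm, Finset.mul_sum]
  have h2 : ∀ m, C Complex.I * ∑ s, C (c m) * (Ahat j s * pderiv s ((Ahat ^ m) k l))
      = C (c m) * ((∑ s, (Ahat ^ m) k s * C (f s j l)) + ∑ s, (Ahat ^ m) s l * C (f j k s)) := by
    intro m
    rw [← hpow m k l]
    rw [Finset.mul_sum, Finset.mul_sum, Finset.mul_sum]
    exact Finset.sum_congr rfl fun s _ => by ring
  rw [Finset.sum_congr rfl fun m _ => h2 m]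
  simp only [mul_add, Finset.sum_add_distrib, Finset.mul_sum, Finset.sum_mul]
  congr 1
  · rw [Finset.sum_comm]
    refine Finset.sum_congr rfl fun s _ => Finset.sum_congr rfl fun m _ => by ring
  · rw [Finset.sum_comm]
    refine Finset.sum_congr rfl fun s _ => Finset.sum_congr rfl fun m _ => by ring
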